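/- Let α ∈ (0,1], a ∈ ℝ, n ∈ ℕ, and s > 0 with (α a / s)^2 < 1. Then the conformable fractional Laplace transform L_α[t^{αn} sin(a t^α)](s) = ∫_0^∞ e^{−s t^α/α} t^{αn} sin(a t^α) t^{α−1} dt equals (a α^{n+1} Γ(n+2)/s^{n+2}) · ₂F₁((n+2)/2, (n+3)/2; 3/2; −(α a/s)^2). -/

import Mathlib

open scoped Real BigOperators

noncomputable def poch (b : ℝ) (n : ℕ) : ℝ := (ascPochhammer ℝ n).eval b

noncomputable def F21 (μ ν c z : ℝ) : ℝ :=
  ∑' n : ℕ, poch μ n * poch ν n / (poch c n * (n.factorial : ℝ)) * z ^ n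

noncomputable def confD (α : ℝ) (f : ℝ → ℝ) : ℝ → ℝ :=
  fun x => x ^ (1 - α) * deriv f x

noncomputable def theta (α : ℝ) (f : ℝ → ℝ) : ℝ → ℝ :=
  fun x => (1 / α) * x ^ α * confD α f x

open MeasureTheory Set

lemma poch_zero (b : ℝ) : poch b 0 = 1 := by simp [poch]

lemma poch_succ (b : ℝ) (k : ℕ) : poch b (k+1) = poch b k * (b + k) := by
  simp [poch, ascPochhammer_succ_eval]

lemma poch_pos {b : ℝ} (hb : 0 < b) (k : ℕ) : 0 < poch b k := by
  induction k with
  | zero => simp [poch_zero]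
  | succ k ih => rw [poch_succ]; positivity

lemma poch_three_half (k : ℕ) :
    (4:ℝ)^k * (k.factorial : ℝ) * poch (3/2) k = ((2*k+1).factorial : ℝ) := by
  induction k with
  | zero => simp [poch_zero]
  | succ k ih =>
    have hf : ((2*(k+1)+1).factorial : ℝ) = ((2*(k:ℝ)+3)*(2*(k:ℝ)+2)) * ((2*k+1).factorial : ℝ) := by
      have h2 : (2*(k+1)+1).factorial = ((2*k+1+2)*(2*k+1+1)) * (2*k+1).factorial := by
        rw [show 2*(k+1)+1 = (2*k+1)+1+1 by ring, Nat.factorial_succ ((2*k+1)+1),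
          Nat.factorial_succ (2*k+1)]
        ring
      rw [h2]; push_cast; ring
    rw [poch_succ, hf, Nat.factorial_succ k]
    push_cast
    linear_combination (4*((k:ℝ)+1)*(3/2+(k:ℝ))) * ih

lemma poch_pair (n k : ℕ) :
    (4:ℝ)^k * ((n+1).factorial : ℝ) * (poch (((n:ℝ)+2)/2) k * poch (((n:ℝ)+3)/2) k)
      = ((n + 2*k + 1).factorial : ℝ) := by
  induction k with
  | zero => simp [poch_zero]
  | succ k ih =>
    have hf : ((n+2*(k+1)+1).factorial : ℝ)
        = (((n:ℝ)+2*(k:ℝ)+3)*((n:ℝ)+2*(k:ℝ)+2)) * ((n+2*k+1).factorial : ℝ) := by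
      have h2 : (n+2*(k+1)+1).factorial = ((n+2*k+1+2)*(n+2*k+1+1)) * (n+2*k+1).factorial := by
        rw [show n+2*(k+1)+1 = (n+2*k+1)+1+1 by ring, Nat.factorial_succ ((n+2*k+1)+1),
          Nat.factorial_succ (n+2*k+1)]
        ring
      rw [h2]; push_cast; ring
    rw [poch_succ, poch_succ, hf]
    linear_combination (4*(((n:ℝ)+2)/2+(k:ℝ))*(((n:ℝ)+3)/2+(k:ℝ))) * ih

lemma fact_add_le (m p : ℕ) : (p + m).factorial ≤ (p + m)^m * p.factorial := by
  induction m with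
  | zero => simp
  | succ m ih =>
    calc (p + (m+1)).factorial = (p+m+1) * (p+m).factorial := by
          rw [show p+(m+1) = (p+m)+1 by ring, Nat.factorial_succ]
      _ ≤ (p+m+1) * ((p+m)^m * p.factorial) := Nat.mul_le_mul_left _ ih
      _ ≤ (p+m+1) * ((p+m+1)^m * p.factorial) :=
          Nat.mul_le_mul_left _ (Nat.mul_le_mul_right _ (Nat.pow_le_pow_left (by omega) m))
      _ = (p+(m+1))^(m+1) * p.factorial := by
          rw [show p+(m+1) = p+m+1 by ring]; ring

lemma aux_summable (n : ℕ) {ρ : ℝ} (h0 : 0 < ρ) (h1 : ρ < 1) :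
    Summable (fun k : ℕ => ((k:ℝ)+1)^n * ρ^k) := by
  have h2 : ‖ρ‖ < 1 := by rw [Real.norm_eq_abs, abs_of_pos h0]; exact h1
  have h3 := (summable_nat_add_iff (f := fun m : ℕ => (m:ℝ)^n * ρ^m) 1).mpr
    (summable_pow_mul_geometric_of_norm_lt_one n h2)
  refine (h3.mul_left (1/ρ)).congr fun k => ?_
  push_cast
  field_simp
  ring

lemma mint_integrable {c : ℝ} (hc : 0 < c) (m : ℕ) :
    IntegrableOn (fun u : ℝ => u^m * Real.exp (-c*u)) (Ioi 0) := by
  have h := integrableOn_rpow_mul_exp_neg_mul_rpow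
    (show (-1:ℝ) < (m:ℝ) by linarith [Nat.cast_nonneg (α:=ℝ) m]) (zero_lt_one (α := ℝ)) hc
  refine h.congr_fun (fun u hu => ?_) measurableSet_Ioi
  dsimp only
  rw [Real.rpow_natCast, Real.rpow_one]

lemma mint_val {c : ℝ} (hc : 0 < c) (m : ℕ) :
    ∫ u in Ioi 0, u^m * Real.exp (-c*u) = (m.factorial : ℝ) / c^(m+1) := by
  have h := Real.integral_rpow_mul_exp_neg_mul_Ioi (a := (m:ℝ)+1) (r := c) (by positivity) hc
  rw [Real.Gamma_nat_eq_factorial] at h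
  simp_rw [show ((m:ℝ)+1-1) = ((m:ℕ):ℝ) by push_cast; ring, Real.rpow_natCast] at h
  rw [show ((1:ℝ)/c) ^ ((m:ℝ)+1) = 1/c^(m+1) by
    rw [show ((m:ℝ)+1) = ((m+1:ℕ):ℝ) by push_cast; ring, Real.rpow_natCast, div_pow, one_pow]] at h
  simp_rw [neg_mul]
  rw [h]
  ring

theorem stmt19 (α : ℝ) (hα : α ∈ Set.Ioc (0:ℝ) 1) (a : ℝ) (n : ℕ) (s : ℝ)
    (hs : 0 < s) (h1 : (α * a / s) ^ 2 < 1) :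
    ∫ t in Set.Ioi (0:ℝ),
        Real.exp (-s * t ^ α / α) * (t ^ (α * n) * Real.sin (a * t ^ α)) * t ^ (α - 1)
      = (a * α ^ (n + 1) * Real.Gamma ((n : ℝ) + 2) / s ^ (n + 2))
        * F21 (((n : ℝ) + 2) / 2) (((n : ℝ) + 3) / 2) (3 / 2) (-(α * a / s) ^ 2) := by
  obtain ⟨hα0, hα1⟩ := hα
  by_cases ha : a = 0
  · subst ha; simp
  -- setup
  set c : ℝ := s / α with hc
  have hcpos : 0 < c := div_pos hs hα0
  set g : ℝ → ℝ := fun u => (1/α) * (Real.exp (-c*u) * (u^n * Real.sin (a*u))) with hg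
  -- Step 1 : substitution u = t^α
  have step1 : (∫ t in Set.Ioi (0:ℝ),
      Real.exp (-s * t ^ α / α) * (t ^ (α * n) * Real.sin (a * t ^ α)) * t ^ (α - 1))
      = ∫ u in Ioi (0:ℝ), g u := by
    rw [← integral_comp_rpow_Ioi g hα0.ne']
    refine setIntegral_congr_fun measurableSet_Ioi (fun t ht => ?_)
    have htpos : (0:ℝ) < t := ht
    rw [smul_eq_mul, abs_of_pos hα0, Real.rpow_mul htpos.le α (n:ℝ), Real.rpow_natCast]
    simp only [hg]
    rw [show -s * t^α / α = -c * t^α by rw [hc]; field_simp]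
    field_simp
  -- the summands
  set G : ℕ → ℝ → ℝ := fun k u =>
    ((1/α) * ((-1)^k * a^(2*k+1) / (((2*k+1).factorial : ℝ))))
      * (u^(n+2*k+1) * Real.exp (-c*u)) with hG
  have hsum : ∀ u : ℝ, HasSum (fun k => G k u) (g u) := by
    intro u
    have h := (Real.hasSum_sin (a*u)).mul_left ((1/α) * (u^n * Real.exp (-c*u)))
    convert h using 1
    · rfl
    · funext k
      simp only [hG]
      rw [mul_pow]
      rw [pow_add, pow_mul]  -- maybe not needed
      ring
    · simp only [hg]; ring
  -- integrability of each summand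
  have hGint : ∀ k, IntegrableOn (G k) (Ioi 0) := by
    intro k
    exact (mint_integrable hcpos (n+2*k+1)).const_mul _
  -- ratio r and geometric bound
  set r : ℝ := |a| / c with hr
  have hrpos : 0 < r := div_pos (abs_pos.mpr ha) hcpos
  have hr1 : r < 1 := by
    have h2 : r^2 = (α * a / s)^2 := by
      rw [hr, hc]
      rw [div_div_eq_mul_div, div_pow, div_pow]
      rw [mul_pow, mul_pow, sq_abs]
      ring
    nlinarith
  set ρ : ℝ := r^2 with hρ
  have hρpos : 0 < ρ := by positivity
  have hρ1 : ρ < 1 := by nlinarith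
  -- exact value of the norm integrals
  have hnormval : ∀ k, (∫ u in Ioi 0, ‖G k u‖)
      = ((1/α) * (|a|^(2*k+1) / ((2*k+1).factorial : ℝ)))
        * (((n+2*k+1).factorial : ℝ) / c^(n+2*k+2)) := by
    intro k
    have heq : ∀ u ∈ Ioi (0:ℝ), ‖G k u‖
        = ((1/α) * (|a|^(2*k+1) / ((2*k+1).factorial : ℝ))) * (u^(n+2*k+1) * Real.exp (-c*u)) := by
      intro u hu
      have hu0 : (0:ℝ) < u := hu
      simp only [hG]
      simp [Real.norm_eq_abs, abs_mul, abs_div, abs_pow, abs_neg, abs_one,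
        abs_of_pos hu0, abs_of_pos hα0, Real.abs_exp, Nat.abs_cast]
    rw [setIntegral_congr_fun measurableSet_Ioi heq, integral_const_mul _ _,
      mint_val hcpos (n+2*k+1)]
  -- summability of the norm integrals
  have hsummable : Summable (fun k => ∫ u in Ioi 0, ‖G k u‖) := by
    have hb : Summable (fun k : ℕ =>
        ((1/α) * ((n:ℝ)+3)^n / c^(n+1)) * (((k:ℝ)+1)^n * ρ^k)) :=
      (aux_summable n hρpos hρ1).mul_left _
    refine Summable.of_nonneg_of_le (fun k => ?_) (fun k => ?_) hb
    · exact integral_nonneg (fun u => norm_nonneg _)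
    · rw [hnormval k]
      have e1 : (((n+2*k+1).factorial : ℕ) : ℝ)
          ≤ ((n+2*k+1:ℕ):ℝ)^n * (((2*k+1).factorial : ℕ) : ℝ) := by
        have := fact_add_le n (2*k+1)
        rw [show 2*k+1+n = n+2*k+1 by ring] at this
        exact_mod_cast this
      have e2 : ((n+2*k+1:ℕ):ℝ)^n ≤ ((n:ℝ)+3)^n * ((k:ℝ)+1)^n := by
        rw [← mul_pow]
        refine pow_le_pow_left₀ (by positivity) ?_ n
        push_cast
        nlinarith [Nat.cast_nonneg (α:=ℝ) n, Nat.cast_nonneg (α:=ℝ) k]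
      have hfk : (0:ℝ) < (((2*k+1).factorial : ℕ) : ℝ) := by positivity
      have hNF : (((n+2*k+1).factorial : ℕ) : ℝ) / (((2*k+1).factorial : ℕ) : ℝ)
          ≤ ((n:ℝ)+3)^n * ((k:ℝ)+1)^n := by
        rw [div_le_iff₀ hfk]
        exact e1.trans (mul_le_mul_of_nonneg_right e2 hfk.le)
      have hAC : |a|^(2*k+1) / c^(n+2*k+2) ≤ ρ^k / c^(n+1) := by
        have h5 : |a|^(2*k+1) / c^(n+2*k+2) = (r^(2*k+1)) / c^(n+1) := by
          rw [hr, div_pow, show n+2*k+2 = (2*k+1)+(n+1) by ring, pow_add]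
          ring
        rw [h5, div_le_div_iff_of_pos_right (by positivity : (0:ℝ) < c^(n+1)), hρ, ← pow_mul]
        exact pow_le_pow_of_le_one hrpos.le hr1.le (by omega)
      calc (1/α) * (|a|^(2*k+1) / (((2*k+1).factorial : ℕ) : ℝ))
            * ((((n+2*k+1).factorial : ℕ) : ℝ) / c^(n+2*k+2))
          = (1/α) * (((((n+2*k+1).factorial : ℕ) : ℝ) / (((2*k+1).factorial : ℕ) : ℝ))
              * (|a|^(2*k+1) / c^(n+2*k+2))) := by ring
        _ ≤ (1/α) * ((((n:ℝ)+3)^n * ((k:ℝ)+1)^n) * (ρ^k / c^(n+1))) := by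
            refine mul_le_mul_of_nonneg_left ?_ (by positivity)
            exact mul_le_mul hNF hAC (by positivity) (by positivity)
        _ = ((1/α) * ((n:ℝ)+3)^n / c^(n+1)) * (((k:ℝ)+1)^n * ρ^k) := by ring
  -- swap integral and sum
  have step2 : (∑' k, ∫ u in Ioi 0, G k u) = ∫ u in Ioi 0, g u := by
    rw [MeasureTheory.integral_tsum_of_summable_integral_norm hGint hsummable]
    exact integral_congr_ae (Filter.Eventually.of_forall fun u => (hsum u).tsum_eq)
  -- value of each integral
  have hval : ∀ k, (∫ u in Ioi 0, G k u)
      = ((1/α) * ((-1)^k * a^(2*k+1) / (((2*k+1).factorial : ℕ) : ℝ)))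
        * ((((n+2*k+1).factorial : ℕ) : ℝ) / c^(n+2*k+2)) := by
    intro k
    simp only [hG]
    rw [integral_const_mul _ _, mint_val hcpos (n+2*k+1)]
  rw [step1, ← step2]
  have hGamma : Real.Gamma ((n:ℝ)+2) = (((n+1).factorial : ℕ) : ℝ) := by
    rw [show ((n:ℝ)+2) = ((n+1:ℕ):ℝ)+1 by push_cast; ring, Real.Gamma_nat_eq_factorial]
  rw [hGamma, F21, ← tsum_mul_left]
  refine tsum_congr fun k => ?_
  rw [hval k]
  have hQ := poch_three_half k
  have hP := poch_pair n k
  have hQpos := poch_pos (by norm_num : (0:ℝ) < 3/2) k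
  have hfk : (((2*k+1).factorial : ℕ) : ℝ) ≠ 0 := by positivity
  have hkk : ((k.factorial : ℕ) : ℝ) ≠ 0 := by positivity
  have hneg : (-(α * a / s)^2)^k = (-1)^k * (α^(2*k) * a^(2*k) / s^(2*k)) := by
    rw [neg_pow, ← pow_mul, div_pow, mul_pow]
  rw [← hQ, ← hP, hc, hneg]
  have hαne : α ≠ 0 := hα0.ne'
  field_simp
  have e : α^2*α^(k*2)*α^n*α⁻¹^2*α⁻¹^(k*2)*α⁻¹^n = 1 := by
    rw [inv_pow, inv_pow, inv_pow]; field_simp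
  linear_combination (-(a * a ^ (k * 2) * poch (((n:ℝ) + 2) / 2) k * poch (((n:ℝ) + 3) / 2) k
    * s ^ 2 * s ^ (k * 2) * s ^ n)) * e
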